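/- For a continuous function f between metric spaces X and Y, the big Lipschitz derivative Lip f : X → [0,∞] is ℱ_σ-upper semicontinuous, i.e. for every real γ the set {x : Lip f(x) < γ} is an F_σ subset of X. -/

import Mathlib

open Metric Filter ENNReal Topology

/-- For a continuous f, Lip f is ℱ_σ-upper semicontinuous. -/
theorem Lip_Fsigma_upperSemicontinuous {X Y : Type*} [MetricSpace X] [MetricSpace Y]
    (f : X → Y) (hf : Continuous f) :
    ∀ γ : ℝ, ∃ F : ℕ → Set X, (∀ n, IsClosed (F n)) ∧
      {x : X | limsup (fun u => edist (f u) (f x) / edist u x) (𝓝[≠] x) <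
        ENNReal.ofReal γ} = ⋃ n, F n := by
  intro γ
  set L : X → ℝ≥0∞ := fun x => limsup (fun u => edist (f u) (f x) / edist u x) (𝓝[≠] x) with hL
  set c : ℕ → ℝ≥0∞ := fun k => ENNReal.ofReal γ - 1 / (k + 1) with hc
  have hck_top : ∀ k, c k ≠ ∞ := fun k =>
    ne_top_of_le_ne_top ENNReal.ofReal_ne_top tsub_le_self
  set G : ℕ → ℕ → Set X := fun k n =>
    if c k < ENNReal.ofReal γ then
      {x | ∀ u, edist u x < 1 / (n + 1) → edist (f u) (f x) ≤ c k * edist u x}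
    else ∅ with hG
  -- closedness
  have hGclosed : ∀ k n, IsClosed (G k n) := by
    intro k n
    simp only [hG]
    split_ifs with h
    · apply IsSeqClosed.isClosed
      intro xs x hxs hx u hu
      have h1 : ∀ᶠ j in atTop, edist u (xs j) < 1 / (n + 1) := by
        have ht : Tendsto (fun j => edist u (xs j)) atTop (𝓝 (edist u x)) :=
          tendsto_const_nhds.edist hx
        exact ht.eventually (gt_mem_nhds hu)
      have h2 : Tendsto (fun j => edist (f u) (f (xs j))) atTop (𝓝 (edist (f u) (f x))) :=
        tendsto_const_nhds.edist ((hf.tendsto x).comp hx)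
      have h3 : Tendsto (fun j => c k * edist u (xs j)) atTop (𝓝 (c k * edist u x)) :=
        ENNReal.Tendsto.const_mul (tendsto_const_nhds.edist hx) (Or.inr (hck_top k))
      exact le_of_tendsto_of_tendsto h2 h3 (h1.mono fun j hj => hxs j u hj)
    · exact isClosed_empty
  -- main set equality
  have key : {x : X | L x < ENNReal.ofReal γ} = ⋃ k, ⋃ n, G k n := by
    ext x
    simp only [Set.mem_setOf_eq, Set.mem_iUnion]
    constructor
    · intro hx
      obtain ⟨r, hr0, hr⟩ := ENNReal.lt_iff_exists_add_pos_lt.1 hx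
      obtain ⟨k, hk⟩ := ENNReal.exists_inv_nat_lt (a := (r : ℝ≥0∞))
        (by exact_mod_cast hr0.ne')
      have hk1 : (1 : ℝ≥0∞) / (k + 1) < r := by
        calc (1 : ℝ≥0∞) / (k + 1) = ((k + 1 : ℕ) : ℝ≥0∞)⁻¹ := by
              rw [one_div]; push_cast; ring_nf
          _ ≤ ((k : ℕ) : ℝ≥0∞)⁻¹ := by
              apply ENNReal.inv_le_inv.2; exact_mod_cast Nat.le_succ k
          _ < r := hk
      have hLck : L x < c k := by
        rw [hc]
        refine (ENNReal.cancel_of_ne (by simp [ENNReal.div_eq_top])).lt_tsub_iff_right.2 ?_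
        calc L x + 1 / (k + 1) ≤ L x + r := add_le_add_right hk1.le _
          _ < ENNReal.ofReal γ := hr
      have hckγ : c k < ENNReal.ofReal γ := by
        refine ENNReal.sub_lt_self ENNReal.ofReal_ne_top ?_ (by simp)
        intro h0
        rw [h0] at hx
        exact (not_lt_bot hx)
      have hev : ∀ᶠ u in 𝓝[≠] x, edist (f u) (f x) / edist u x < c k :=
        eventually_lt_of_limsup_lt hLck
      rw [eventually_iff, EMetric.mem_nhdsWithin_iff] at hev
      obtain ⟨δ, hδ0, hδ⟩ := hev
      obtain ⟨m, hm⟩ := ENNReal.exists_inv_nat_lt hδ0.ne'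
      refine ⟨k, m, ?_⟩
      simp only [hG, if_pos hckγ, Set.mem_setOf_eq]
      intro u hu
      rcases eq_or_ne u x with rfl | hux
      · simp
      · have humem : u ∈ Metric.eball x δ ∩ {x}ᶜ := by
          constructor
          · rw [EMetric.mem_ball]
            calc edist u x < 1 / (m + 1) := hu
              _ = ((m + 1 : ℕ) : ℝ≥0∞)⁻¹ := by rw [one_div]; push_cast; ring_nf
              _ ≤ ((m : ℕ) : ℝ≥0∞)⁻¹ := by
                  apply ENNReal.inv_le_inv.2; exact_mod_cast Nat.le_succ m
              _ < δ := hm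
          · exact hux
        have := hδ humem
        simp only [Set.mem_setOf_eq] at this
        exact (ENNReal.div_le_iff_le_mul (Or.inl (edist_pos.2 hux).ne')
          (Or.inl (edist_ne_top u x))).1 this.le
    · rintro ⟨k, n, hx⟩
      simp only [hG] at hx
      split_ifs at hx with h
      · refine lt_of_le_of_lt ?_ h
        apply limsup_le_of_le
        · isBoundedDefault
        · have hball : EMetric.ball x (1 / (n + 1)) ∈ 𝓝 x :=
            EMetric.ball_mem_nhds x (by simp)
          filter_upwards [nhdsWithin_le_nhds hball, self_mem_nhdsWithin] with u hu hux
          have := hx u (EMetric.mem_ball.1 hu)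
          exact (ENNReal.div_le_iff_le_mul (Or.inl (edist_pos.2 hux).ne')
            (Or.inl (edist_ne_top u x))).2 this
      · exact absurd hx (Set.notMem_empty x)
  -- reindex ℕ × ℕ by ℕ
  let e : ℕ ≃ ℕ × ℕ := (Denumerable.eqv (ℕ × ℕ)).symm
  refine ⟨fun m => G (e m).1 (e m).2, fun m => hGclosed _ _, ?_⟩
  rw [key]
  exact ((e.surjective.iUnion_comp fun p : ℕ × ℕ => G p.1 p.2).trans
    (Set.iUnion_prod' fun p : ℕ × ℕ => G p.1 p.2)).symm
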